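/- For any dataset, TMP_c equals the optimal value ε̄_c of the linear program: minimize ∑_t ε_t over u ∈ ℝ^T, ε ∈ ℝ_+^T subject to u_s ≤ u_t + p^t·(x^s - x^t) + ε_t for all pairs (s,t) with p^t·x^t ≥ p^t·x^s. -/

import Mathlib

open Matrix BigOperators

namespace TMPCore

variable {T : ℕ}

section Defs

variable (a : Fin T → Fin T → ℝ) (π : Equiv.Perm (Fin T))

/-- Arc relation of the exchange graph, in "reversed list order":
`Q s s'` means there is an arc from `s'` to `s`. -/
def Q (s s' : Fin T) : Prop := 0 ≤ a (π.symm s') s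

/-- Cost of the arc from `s'` to `s`. -/
def qc (s s' : Fin T) : ℝ := a (π.symm s') s' - a (π.symm s') s

/-- Cost of a (reversed) walk. -/
def rcost : List (Fin T) → ℝ
  | [] => 0
  | [_] => 0
  | s :: s' :: m => qc a π s s' + rcost (s' :: m)

@[simp] lemma rcost_nil : rcost a π [] = 0 := rfl
@[simp] lemma rcost_singleton (s : Fin T) : rcost a π [s] = 0 := rfl
@[simp] lemma rcost_cons_cons (s s' : Fin T) (m : List (Fin T)) :
    rcost a π (s :: s' :: m) = qc a π s s' + rcost a π (s' :: m) := rfl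

open scoped Classical in
/-- Bellman-Ford iterates. -/
noncomputable def dd : ℕ → Fin T → ℝ
  | 0, _ => 0
  | k+1, s => Finset.univ.inf' ⟨s, Finset.mem_univ s⟩
      (fun s' => if Q a π s s' then min (dd k s) (dd k s' + qc a π s s') else dd k s)

end Defs

variable {a : Fin T → Fin T → ℝ} {π : Equiv.Perm (Fin T)}

lemma dd_succ_le_self (k : ℕ) (s : Fin T) : dd a π (k+1) s ≤ dd a π k s := by
  classical
  refine le_trans (Finset.inf'_le _ (Finset.mem_univ s)) ?_
  split_ifs
  · exact min_le_left _ _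
  · exact le_rfl

lemma dd_nonpos (k : ℕ) (s : Fin T) : dd a π k s ≤ 0 := by
  induction k with
  | zero => exact le_of_eq rfl
  | succ k ih => exact le_trans (dd_succ_le_self k s) ih

lemma dd_le_arc {s s' : Fin T} (h : Q a π s s') (k : ℕ) :
    dd a π (k+1) s ≤ dd a π k s' + qc a π s s' := by
  classical
  refine le_trans (Finset.inf'_le _ (Finset.mem_univ s')) ?_
  rw [if_pos h]
  exact min_le_right _ _

lemma dd_cases (k : ℕ) (s : Fin T) :
    dd a π (k+1) s = dd a π k s ∨
      ∃ s', Q a π s s' ∧ dd a π (k+1) s = dd a π k s' + qc a π s s' := by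
  classical
  obtain ⟨s', -, hs'⟩ := Finset.exists_mem_eq_inf' (⟨s, Finset.mem_univ s⟩ :
    (Finset.univ : Finset (Fin T)).Nonempty)
    (fun s' => if Q a π s s' then min (dd a π k s) (dd a π k s' + qc a π s s') else dd a π k s)
  rw [show dd a π (k+1) s = _ from rfl] at *
  by_cases hq : Q a π s s'
  · rw [if_pos hq] at hs'
    rcases min_cases (dd a π k s) (dd a π k s' + qc a π s s') with ⟨h1, -⟩ | ⟨h1, -⟩
    · exact Or.inl (hs'.trans h1)
    · exact Or.inr ⟨s', hq, hs'.trans h1⟩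
  · rw [if_neg hq] at hs'
    exact Or.inl hs'

/-- L1 : `dd` is below the cost of any walk. -/
lemma dd_le_rcost : ∀ (k : ℕ) (s : Fin T) (m : List (Fin T)),
    List.Chain' (Q a π) (s :: m) → m.length ≤ k → dd a π k s ≤ rcost a π (s :: m)
  | 0, s, m, _, hlen => by
      interval_cases h : m.length
      · rw [List.length_eq_zero_iff] at h; subst h; simp [dd]
  | k+1, s, [], _, _ => by simpa using dd_nonpos (k+1) s
  | k+1, s, s' :: m, hc, hlen => by
      simp only [List.Chain'] at hc
      rw [List.isChain_cons_cons] at hc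
      have h1 := dd_le_arc hc.1 k
      have h2 := dd_le_rcost k s' m hc.2 (by simpa using hlen)
      rw [rcost_cons_cons]
      linarith

/-- L2 : `dd k s` is attained by some walk of length `≤ k`. -/
lemma exists_walk_dd : ∀ (k : ℕ) (s : Fin T),
    ∃ m : List (Fin T), List.Chain' (Q a π) (s :: m) ∧ m.length ≤ k ∧
      rcost a π (s :: m) = dd a π k s
  | 0, s => ⟨[], List.isChain_singleton s, le_rfl, rfl⟩
  | k+1, s => by
      rcases dd_cases k s with h | ⟨s', hq, h⟩
      · obtain ⟨m, hc, hlen, hr⟩ := exists_walk_dd k s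
        exact ⟨m, hc, hlen.trans (Nat.le_succ k), by rw [hr, h]⟩
      · obtain ⟨m, hc, hlen, hr⟩ := exists_walk_dd k s'
        refine ⟨s' :: m, List.isChain_cons_cons.mpr ⟨hq, hc⟩, by simpa using hlen, ?_⟩
        rw [rcost_cons_cons, hr, h]; ring

end TMPCore

namespace Part2
variable {T : ℕ} {a : Fin T → Fin T → ℝ} {π : Equiv.Perm (Fin T)}
open TMPCore

/-- splitting the cost of a walk at an intermediate vertex. -/
lemma rcost_split : ∀ (m₁ : List (Fin T)) (x : Fin T) (m₂ : List (Fin T)),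
    rcost a π (m₁ ++ x :: m₂) = rcost a π (m₁ ++ [x]) + rcost a π (x :: m₂)
  | [], x, m₂ => by simp
  | [u], x, m₂ => by simp
  | u :: u' :: m₁, x, m₂ => by
      have ih := rcost_split (u' :: m₁) x m₂
      simp only [List.cons_append, rcost_cons_cons] at *
      rw [ih]; ring

lemma rcost_ofFn : ∀ (n : ℕ) (v : Fin (n+1) → Fin T),
    rcost a π (List.ofFn v) = ∑ i : Fin n, qc a π (v i.castSucc) (v i.succ)
  | 0, v => by simp
  | (n+1), v => by
      have ih := rcost_ofFn n (fun i => v i.succ)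
      have e2 : (List.ofFn fun i : Fin (n+1) => v i.succ)
          = v (Fin.succ 0) :: (List.ofFn fun i : Fin n => v i.succ.succ) := by
        rw [List.ofFn_succ]
      have e1 : List.ofFn v
          = v 0 :: v (Fin.succ 0) :: (List.ofFn fun i : Fin n => v i.succ.succ) := by
        rw [List.ofFn_succ, e2]
      rw [e2] at ih
      rw [e1, rcost_cons_cons, ih, Fin.sum_univ_succ]
      simp only [Fin.succ_castSucc, Fin.castSucc_zero]

lemma rcost_closed (x : Fin T) (m : List (Fin T)) :
    rcost a π ((x :: m) ++ [x]) =
      ∑ i : Fin (m.length + 1),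
        qc a π ((x :: m).get i) ((x :: m).get (finRotate (m.length + 1) i)) := by
  set n := m.length with hn
  set vv : Fin (n+1) → Fin T := (x :: m).get with hvv
  have hofn : (x :: m) = List.ofFn vv := (List.ofFn_get _).symm
  have hsnoc : (x :: m) ++ [x] = List.ofFn (Fin.snoc vv x : Fin (n+2) → Fin T) := by
    rw [List.ofFn_succ' (Fin.snoc vv x)]
    simp only [Fin.snoc_castSucc, Fin.snoc_last, List.concat_eq_append, Fin.init_snoc]
    rw [← hofn]
  rw [hsnoc, rcost_ofFn]
  apply Finset.sum_congr rfl; intro i _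
  have h1 : (Fin.snoc vv x : Fin (n+2) → Fin T) i.castSucc = vv i := Fin.snoc_castSucc ..
  have h2 : (Fin.snoc vv x : Fin (n+2) → Fin T) i.succ = vv (finRotate _ i) := by
    rcases eq_or_ne i (Fin.last n) with rfl | hne
    · rw [Fin.succ_last, Fin.snoc_last, finRotate_succ_apply]
      have : (Fin.last n) + 1 = 0 := by
        apply Fin.ext; simp [Fin.add_def]
      rw [this]
      rfl
    · have : i.succ = ((finRotate (n+1)) i).castSucc := by
        apply Fin.ext
        simp only [Fin.val_succ, Fin.coe_castSucc, coe_finRotate_of_ne_last hne]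
      rw [this, Fin.snoc_castSucc]
  rw [h1, h2]

end Part2

namespace Part3
variable {T : ℕ} {a : Fin T → Fin T → ℝ} {π : Equiv.Perm (Fin T)}
open TMPCore Part2

set_option maxHeartbeats 2000000 in
lemma cyc_nonneg
    (hadm : ∀ t, 0 ≤ a t (π t))
    (hmax : ∀ σ : Equiv.Perm (Fin T), (∀ t, 0 ≤ a t (σ t)) →
      ∑ t, a t (σ t) ≤ ∑ t, a t (π t))
    (x : Fin T) (m : List (Fin T)) (hnd : (x :: m).Nodup)
    (hc : List.Chain' (Q a π) ((x :: m) ++ [x])) :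
    0 ≤ rcost a π ((x :: m) ++ [x]) := by
  classical
  set n := m.length with hn
  set vv : Fin (n + 1) → Fin T := (x :: m).get with hvv
  have hvinj : Function.Injective vv := List.nodup_iff_injective_get.mp hnd
  set TL : Fin (n + 1) → Fin T := fun i => π.symm (vv i) with hTL
  have hTLinj : Function.Injective TL := fun i j h => hvinj (π.symm.injective h)
  set RL : Fin (n + 1) → Fin T := fun k => TL k.rev with hRL
  have hRLinj : Function.Injective RL := fun i j h => by
    have := hTLinj h; exact Fin.rev_injective this
  have hrln : (List.ofFn RL).Nodup := List.nodup_ofFn.mpr hRLinj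
  set ρ : Equiv.Perm (Fin T) := (List.ofFn RL).formPerm with hρdef
  set σ' : Equiv.Perm (Fin T) := ρ.trans π with hσdef
  have hσapp : ∀ t, σ' t = π (ρ t) := fun t => rfl
  have hTLRL : ∀ j : Fin (n+1), TL j = RL j.rev := by
    intro j; rw [hRL]; simp
  -- the formPerm computation
  have hρ : ∀ i : Fin (n + 1), ρ (TL (finRotate (n+1) i)) = TL i := by
    intro i
    set j : Fin (n+1) := finRotate (n+1) i with hj
    have key := List.formPerm_apply_getElem (List.ofFn RL) hrln ((j.rev : ℕ))
      (by simp)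
    simp only [List.getElem_ofFn, List.length_ofFn] at key
    have e1 : (⟨(j.rev : ℕ), by simpa using j.rev.isLt⟩ : Fin (n+1)) = j.rev :=
      Fin.ext rfl
    have harith : ((j.rev : ℕ) + 1) % (n + 1) = (i.rev : ℕ) := by
      rcases eq_or_ne i (Fin.last n) with rfl | hne
      · have hj0 : (j : ℕ) = 0 := by rw [hj, finRotate_last]; rfl
        have : (j.rev : ℕ) = n := by simp [Fin.val_rev, hj0]
        rw [this, Nat.mod_self]
        simp [Fin.val_rev]
      · have hival : (i : ℕ) < n := by
          have h1 := i.isLt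
          rcases Nat.lt_or_ge (i : ℕ) n with h | h
          · exact h
          · exact absurd (Fin.ext (by simpa using (by omega : (i : ℕ) = n))) hne
        have hjval : (j : ℕ) = (i : ℕ) + 1 := by
          rw [hj]; exact coe_finRotate_of_ne_last hne
        have h1 : (j.rev : ℕ) = n - ((i:ℕ) + 1) := by simp [Fin.val_rev, hjval]
        rw [h1]
        have h2 : n - ((i:ℕ) + 1) + 1 = n - (i:ℕ) := by omega
        rw [h2, Nat.mod_eq_of_lt (by omega)]
        simp only [Fin.val_rev]
        omega
    have e2 : (⟨((j.rev : ℕ) + 1) % (n + 1), by omega⟩ : Fin (n+1)) = i.rev :=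
      Fin.ext harith
    rw [e1, e2] at key
    rw [hTLRL j, hTLRL i]
    exact key
  -- chain extraction
  have hwget : ∀ (k : ℕ) (hk : k < n + 1),
      ((x :: m) ++ [x]).get ⟨k, by simp only [List.length_append, List.length_cons, List.length_singleton]; omega⟩ = vv ⟨k, hk⟩ := by
    intro k hk
    have hkl : k < (x :: m).length := by simp only [List.length_cons]; omega
    simp only [List.get_eq_getElem, List.getElem_append_left hkl]
    rw [hvv]; simp [List.get_eq_getElem]
  have hwlast : ((x :: m) ++ [x]).get ⟨n + 1, by simp only [List.length_append, List.length_cons, List.length_singleton]; omega⟩ = x := by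
    have hge : (x :: m).length ≤ n + 1 := by simp [hn]
    simp only [List.get_eq_getElem, List.getElem_append_right hge]
    simp
  have hQc : ∀ i : Fin (n + 1), 0 ≤ a (π.symm (vv (finRotate (n+1) i))) (vv i) := by
    intro i
    have hcg : ∀ i (h : i + 1 < ((x :: m) ++ [x]).length), Q a π (((x :: m) ++ [x]).get ⟨i, by omega⟩) (((x :: m) ++ [x]).get ⟨i+1, h⟩) := fun i h => List.isChain_iff_getElem.mp hc i h
    rcases eq_or_ne i (Fin.last n) with rfl | hne
    · have h0 := hcg n (by simp only [List.length_append, List.length_cons, List.length_singleton]; omega)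
      rw [show ((x :: m) ++ [x]).get ⟨n, by simp only [List.length_append, List.length_cons, List.length_singleton]; omega⟩ = vv ⟨n, by omega⟩ from hwget n (by omega),
        show ((x :: m) ++ [x]).get ⟨n+1, by simp only [List.length_append, List.length_cons, List.length_singleton]; omega⟩ = x from hwlast] at h0
      have e3 : vv (finRotate (n+1) (Fin.last n)) = x := by
        rw [finRotate_last]; rfl
      have e4 : (⟨n, by omega⟩ : Fin (n+1)) = Fin.last n := rfl
      rw [e3]
      rw [e4] at h0
      exact h0
    · have hival : (i : ℕ) < n := by
        have h1 := i.isLt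
        rcases Nat.lt_or_ge (i : ℕ) n with h | h
        · exact h
        · exact absurd (Fin.ext (by simpa using (by omega : (i : ℕ) = n))) hne
      have h0 := hcg (i : ℕ) (by simp only [List.length_append, List.length_cons, List.length_singleton]; omega)
      rw [show ((x :: m) ++ [x]).get ⟨(i:ℕ), by simp only [List.length_append, List.length_cons, List.length_singleton]; omega⟩ = vv ⟨(i:ℕ), by omega⟩
          from hwget (i:ℕ) (by omega),
        show ((x :: m) ++ [x]).get ⟨(i:ℕ)+1, by simp only [List.length_append, List.length_cons, List.length_singleton]; omega⟩ = vv ⟨(i:ℕ)+1, by omega⟩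
          from hwget ((i:ℕ)+1) (by omega)] at h0
      have e3 : (⟨(i:ℕ), by omega⟩ : Fin (n+1)) = i := Fin.ext rfl
      have e4 : (⟨(i:ℕ)+1, by omega⟩ : Fin (n+1)) = finRotate (n+1) i :=
        Fin.ext (by rw [coe_finRotate_of_ne_last hne])
      rw [e3, e4] at h0
      exact h0
  have hmem : ∀ t, t ∈ List.ofFn RL ↔ ∃ i, TL i = t := by
    intro t
    rw [List.mem_ofFn]
    constructor
    · rintro ⟨k, rfl⟩; exact ⟨k.rev, (hTLRL k.rev).trans (by rw [Fin.rev_rev])⟩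
    · rintro ⟨i, rfl⟩; exact ⟨i.rev, (hTLRL i).symm⟩
  have hσTL : ∀ i, σ' (TL (finRotate (n+1) i)) = vv i := by
    intro i
    rw [hσapp, hρ, hTL]
    exact π.apply_symm_apply (vv i)
  have hadm' : ∀ t, 0 ≤ a t (σ' t) := by
    intro t
    by_cases ht : ∃ jj, TL jj = t
    · obtain ⟨jj, rfl⟩ := ht
      obtain ⟨i, rfl⟩ : ∃ i, finRotate (n+1) i = jj :=
        ⟨(finRotate (n+1)).symm jj, Equiv.apply_symm_apply _ _⟩
      rw [hσTL i]
      exact hQc i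
    · rw [hσapp, List.formPerm_apply_of_notMem
        (fun hmem' => ht ((hmem t).mp hmem'))]
      exact hadm t
  have hsum : rcost a π ((x :: m) ++ [x]) = ∑ t, (a t (π t) - a t (σ' t)) := by
    rw [rcost_closed]
    have hterm : ∀ i : Fin (n+1),
        qc a π ((x :: m).get i) ((x :: m).get (finRotate (m.length + 1) i)) =
        a (TL (finRotate (n+1) i)) (π (TL (finRotate (n+1) i)))
          - a (TL (finRotate (n+1) i)) (σ' (TL (finRotate (n+1) i))) := by
      intro i
      have h1 : π (TL (finRotate (n+1) i)) = vv (finRotate (n+1) i) := by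
        rw [hTL]; exact π.apply_symm_apply _
      have h2 : σ' (TL (finRotate (n+1) i)) = vv i := hσTL i
      rw [h1, h2, hTL]
      rfl
    rw [Finset.sum_congr rfl (fun i _ => hterm i)]
    rw [Equiv.sum_comp (finRotate (n+1))
      (fun j => a (TL j) (π (TL j)) - a (TL j) (σ' (TL j)))]
    rw [← Equiv.sum_comp (Fin.revPerm : Equiv.Perm (Fin (n+1)))
      (fun j => a (TL j) (π (TL j)) - a (TL j) (σ' (TL j)))]
    have hRLj : ∀ k : Fin (n+1), TL (Fin.revPerm k) = RL k := by
      intro k; rw [hRL]; rfl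
    rw [Finset.sum_congr rfl (fun k _ => by rw [hRLj k])]
    have h5 : ∑ k : Fin (n+1), (a (RL k) (π (RL k)) - a (RL k) (σ' (RL k)))
        = ((List.ofFn RL).map (fun t => a t (π t) - a t (σ' t))).sum := by
      rw [List.map_ofFn, List.sum_ofFn]
      rfl
    rw [h5, ← List.sum_toFinset _ hrln]
    apply Finset.sum_subset (Finset.subset_univ _)
    intro t _ htn
    have htnl : t ∉ List.ofFn RL := fun hmem' => htn (List.mem_toFinset.mpr hmem')
    rw [hσapp, List.formPerm_apply_of_notMem htnl, sub_self]
  rw [hsum, Finset.sum_sub_distrib]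
  have := hmax σ' hadm'
  linarith

end Part3

namespace Part4
variable {T : ℕ} {a : Fin T → Fin T → ℝ} {π : Equiv.Perm (Fin T)}
open TMPCore Part2 Part3

lemma exists_dup_split {α : Type*} : ∀ (l : List α), ¬ l.Nodup →
    ∃ (y : α) (l₁ l₂ l₃ : List α), l = l₁ ++ y :: l₂ ++ y :: l₃
  | [], h => absurd List.nodup_nil h
  | u :: l, h => by
      by_cases hu : u ∈ l
      · obtain ⟨l₂, l₃, rfl⟩ := List.append_of_mem hu
        exact ⟨u, [], l₂, l₃, rfl⟩
      · have hnd : ¬ l.Nodup := fun hl => h (List.nodup_cons.mpr ⟨hu, hl⟩)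
        obtain ⟨y, l₁, l₂, l₃, rfl⟩ := exists_dup_split l hnd
        exact ⟨y, u :: l₁, l₂, l₃, rfl⟩

lemma closed_nonneg
    (hadm : ∀ t, 0 ≤ a t (π t))
    (hmax : ∀ σ : Equiv.Perm (Fin T), (∀ t, 0 ≤ a t (σ t)) →
      ∑ t, a t (σ t) ≤ ∑ t, a t (π t)) :
    ∀ (k : ℕ) (x : Fin T) (m : List (Fin T)), m.length ≤ k →
      List.Chain' (Q a π) ((x :: m) ++ [x]) → 0 ≤ rcost a π ((x :: m) ++ [x])
  | 0, x, m, hlen, hc => by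
      have hm : m = [] := List.length_eq_zero_iff.mp (Nat.le_zero.mp hlen)
      subst hm
      exact cyc_nonneg hadm hmax x [] (by simp) hc
  | k+1, x, m, hlen, hc => by
      by_cases hnd : (x :: m).Nodup
      · exact cyc_nonneg hadm hmax x m hnd hc
      · obtain ⟨y, l₁, l₂, l₃, heq⟩ := exists_dup_split _ hnd
        have hL : m.length = l₁.length + l₂.length + l₃.length + 1 := by
          have := congrArg List.length heq
          simp at this; omega
        have hw : (x :: m) ++ [x] = l₁ ++ ((y :: l₂) ++ (y :: (l₃ ++ [x]))) := by
          rw [heq]; simp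
        have hc' : List.Chain' (Q a π) (l₁ ++ ((y :: l₂) ++ (y :: (l₃ ++ [x])))) :=
          hw ▸ hc
        have hcmid : List.Chain' (Q a π) ((y :: l₂) ++ [y]) := by
          refine hc'.infix ⟨l₁, l₃ ++ [x], ?_⟩
          simp
        have hmid : 0 ≤ rcost a π ((y :: l₂) ++ [y]) :=
          closed_nonneg hadm hmax k y l₂ (by omega) hcmid
        rcases l₁ with _ | ⟨x₁, l₁'⟩
        · -- x = y, remainder is y :: (l₃ ++ [x])
          have hxy : x = y ∧ m = l₂ ++ y :: l₃ := by
            simpa using heq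
          obtain ⟨rfl, -⟩ := hxy
          have hcrem : List.Chain' (Q a π) ((x :: l₃) ++ [x]) := by
            refine hc'.suffix ⟨x :: l₂, ?_⟩
            simp
          have hrem : 0 ≤ rcost a π ((x :: l₃) ++ [x]) :=
            closed_nonneg hadm hmax k x l₃ (by omega) hcrem
          have hsplit := rcost_split (a := a) (π := π) (x :: l₂) x (l₃ ++ [x])
          rw [hw]
          simp only [List.nil_append]
          rw [show (x :: l₂) ++ (x :: (l₃ ++ [x])) = (x :: l₂) ++ x :: (l₃ ++ [x]) from rfl,
            hsplit]
          have : rcost a π (x :: (l₃ ++ [x])) = rcost a π ((x :: l₃) ++ [x]) := rfl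
          rw [this]
          linarith
        · have hxx : x = x₁ ∧ m = l₁' ++ y :: l₂ ++ y :: l₃ := by
            simpa using heq
          obtain ⟨rfl, -⟩ := hxx
          -- remainder walk
          have hcpre : List.Chain' (Q a π) ((x :: l₁') ++ [y]) := by
            refine hc'.prefix ⟨l₂ ++ y :: (l₃ ++ [x]), ?_⟩
            simp
          have hcsuf : List.Chain' (Q a π) (y :: (l₃ ++ [x])) := by
            refine hc'.suffix ⟨(x :: l₁') ++ y :: l₂, ?_⟩
            simp
          have hcrem : List.Chain' (Q a π) (((x :: l₁') ++ [y]) ++ (l₃ ++ [x])) := by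
            simp only [List.Chain']
            rw [List.isChain_append]
            refine ⟨hcpre, hcsuf.tail, ?_⟩
            intro z hz ww hww
            rw [List.getLast?_concat] at hz
            have hz' : y = z := by simpa using hz
            subst hz'
            rcases List.isChain_cons.mp hcsuf with ⟨hy, -⟩
            exact hy ww hww
          have hrem : 0 ≤ rcost a π ((x :: (l₁' ++ y :: l₃)) ++ [x]) := by
            apply closed_nonneg hadm hmax k x (l₁' ++ y :: l₃)
              (by simp at hL ⊢; omega)
            have : (x :: (l₁' ++ y :: l₃)) ++ [x] = ((x :: l₁') ++ [y]) ++ (l₃ ++ [x]) := by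
              simp
            rw [this]
            exact hcrem
          -- now compute rcost
          rw [hw]
          have e1 := rcost_split (a := a) (π := π) (x :: l₁') y ((l₂ ++ (y :: (l₃ ++ [x]))))
          rw [show (x :: l₁') ++ ((y :: l₂) ++ (y :: (l₃ ++ [x])))
              = (x :: l₁') ++ y :: (l₂ ++ (y :: (l₃ ++ [x]))) from by simp, e1]
          have e2 := rcost_split (a := a) (π := π) (y :: l₂) y (l₃ ++ [x])
          rw [show y :: (l₂ ++ (y :: (l₃ ++ [x]))) = (y :: l₂) ++ y :: (l₃ ++ [x]) from by simp,
            e2]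
          have e3 := rcost_split (a := a) (π := π) (x :: l₁') y (l₃ ++ [x])
          have e4 : rcost a π ((x :: (l₁' ++ y :: l₃)) ++ [x])
              = rcost a π ((x :: l₁') ++ [y]) + rcost a π (y :: (l₃ ++ [x])) := by
            rw [show (x :: (l₁' ++ y :: l₃)) ++ [x] = (x :: l₁') ++ y :: (l₃ ++ [x]) from by simp,
              e3]
          linarith

end Part4

namespace Part5
variable {T : ℕ} {a : Fin T → Fin T → ℝ} {π : Equiv.Perm (Fin T)}
open TMPCore Part2 Part3 Part4

lemma shorten
    (hadm : ∀ t, 0 ≤ a t (π t))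
    (hmax : ∀ σ : Equiv.Perm (Fin T), (∀ t, 0 ≤ a t (σ t)) →
      ∑ t, a t (σ t) ≤ ∑ t, a t (π t)) :
    ∀ (k : ℕ) (s : Fin T) (m : List (Fin T)), m.length ≤ k →
      List.Chain' (Q a π) (s :: m) →
      ∃ m', List.Chain' (Q a π) (s :: m') ∧ (s :: m').length ≤ T ∧
        rcost a π (s :: m') ≤ rcost a π (s :: m)
  | k, s, m, hlen, hc => by
      by_cases hnd : (s :: m).Nodup
      · refine ⟨m, hc, ?_, le_rfl⟩
        have := hnd.length_le_card
        simpa using this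
      · obtain ⟨y, l₁, l₂, l₃, heq⟩ := exists_dup_split _ hnd
        have hL : m.length = l₁.length + l₂.length + l₃.length + 1 := by
          have := congrArg List.length heq
          simp at this; omega
        have hk1 : k ≠ 0 := by
          intro h; subst h
          omega
        obtain ⟨k', rfl⟩ : ∃ k', k = k' + 1 := ⟨k - 1, by omega⟩
        have hc' : List.Chain' (Q a π) (l₁ ++ ((y :: l₂) ++ (y :: l₃))) := by
          rw [show l₁ ++ ((y :: l₂) ++ (y :: l₃)) = l₁ ++ y :: l₂ ++ y :: l₃ from by simp,
            ← heq]
          exact hc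
        have hcmid : List.Chain' (Q a π) ((y :: l₂) ++ [y]) := by
          refine hc'.infix ⟨l₁, l₃, ?_⟩
          simp
        have hmid : 0 ≤ rcost a π ((y :: l₂) ++ [y]) :=
          closed_nonneg hadm hmax l₂.length y l₂ le_rfl hcmid
        rcases l₁ with _ | ⟨s₁, l₁'⟩
        · have hxy : s = y ∧ m = l₂ ++ y :: l₃ := by simpa using heq
          obtain ⟨rfl, rfl⟩ := hxy
          have hcs : List.Chain' (Q a π) (s :: l₃) := by
            refine hc.suffix ⟨s :: l₂, ?_⟩
            simp
          obtain ⟨m', hc'', hlen', hle⟩ := shorten hadm hmax k' s l₃ (by simp at hL hlen ⊢; omega) hcs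
          refine ⟨m', hc'', hlen', ?_⟩
          have hsplit := rcost_split (a := a) (π := π) (s :: l₂) s l₃
          rw [show s :: (l₂ ++ s :: l₃) = (s :: l₂) ++ s :: l₃ from by simp] at *
          rw [hsplit]
          have : rcost a π ((s :: l₂) ++ [s]) = rcost a π ((s :: l₂) ++ [s]) := rfl
          linarith
        · have hxx : s = s₁ ∧ m = l₁' ++ y :: l₂ ++ y :: l₃ := by simpa using heq
          obtain ⟨rfl, rfl⟩ := hxx
          have hcpre : List.Chain' (Q a π) ((s :: l₁') ++ [y]) := by
            refine hc'.prefix ⟨l₂ ++ y :: l₃, ?_⟩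
            simp
          have hcsuf : List.Chain' (Q a π) (y :: l₃) := by
            refine hc'.suffix ⟨(s :: l₁') ++ y :: l₂, ?_⟩
            simp
          have hcrem : List.Chain' (Q a π) (s :: (l₁' ++ y :: l₃)) := by
            have : s :: (l₁' ++ y :: l₃) = ((s :: l₁') ++ [y]) ++ l₃ := by simp
            rw [this]
            simp only [List.Chain']
            rw [List.isChain_append]
            refine ⟨hcpre, hcsuf.tail, ?_⟩
            intro z hz ww hww
            rw [List.getLast?_concat] at hz
            have hz' : y = z := by simpa using hz
            subst hz'
            rcases List.isChain_cons.mp hcsuf with ⟨hy, -⟩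
            exact hy ww hww
          obtain ⟨m', hc'', hlen', hle⟩ := shorten hadm hmax k' s (l₁' ++ y :: l₃)
            (by simp at hL hlen ⊢; omega) hcrem
          refine ⟨m', hc'', hlen', ?_⟩
          -- rcost (s :: m) = rcost (s :: (l₁' ++ y :: l₃)) + rcost ((y::l₂) ++ [y])
          have e1 := rcost_split (a := a) (π := π) (s :: l₁') y (l₂ ++ (y :: l₃))
          have e2 := rcost_split (a := a) (π := π) (y :: l₂) y l₃
          have e3 := rcost_split (a := a) (π := π) (s :: l₁') y l₃
          rw [show s :: (l₁' ++ y :: l₂ ++ y :: l₃) = (s :: l₁') ++ y :: (l₂ ++ (y :: l₃))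
            from by simp, e1]
          rw [show y :: (l₂ ++ (y :: l₃)) = (y :: l₂) ++ y :: l₃ from by simp, e2]
          have e4 : rcost a π (s :: (l₁' ++ y :: l₃))
              = rcost a π ((s :: l₁') ++ [y]) + rcost a π (y :: l₃) := by
            rw [show s :: (l₁' ++ y :: l₃) = (s :: l₁') ++ y :: l₃ from by simp, e3]
          linarith

lemma dd_low
    (hadm : ∀ t, 0 ≤ a t (π t))
    (hmax : ∀ σ : Equiv.Perm (Fin T), (∀ t, 0 ≤ a t (σ t)) →
      ∑ t, a t (σ t) ≤ ∑ t, a t (π t))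
    (s : Fin T) (k : ℕ) : dd a π (T-1) s ≤ dd a π k s := by
  obtain ⟨m, hc, hlen, hr⟩ := exists_walk_dd (a := a) (π := π) k s
  obtain ⟨m', hc', hlen', hle⟩ := shorten hadm hmax m.length s m le_rfl hc
  have hT : 1 ≤ T := by
    rcases Nat.eq_zero_or_pos T with h | h
    · exact absurd (h ▸ s).isLt (by omega)
    · exact h
  have hlen'' : m'.length ≤ T - 1 := by simp at hlen'; omega
  have := dd_le_rcost (a := a) (π := π) (T-1) s m' hc' hlen''
  linarith [hle, hr.ge, hr.le, this]

lemma pot_le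
    (hadm : ∀ t, 0 ≤ a t (π t))
    (hmax : ∀ σ : Equiv.Perm (Fin T), (∀ t, 0 ≤ a t (σ t)) →
      ∑ t, a t (σ t) ≤ ∑ t, a t (π t))
    {s s' : Fin T} (harc : Q a π s s') :
    dd a π (T-1) s ≤ dd a π (T-1) s' + qc a π s s' := by
  have h1 := dd_low hadm hmax s ((T-1)+1)
  have h2 := dd_le_arc (a := a) (π := π) harc (T-1)
  linarith

lemma strong_exists (h0 : ∀ t : Fin T, a t t = 0)
    (hadm : ∀ t, 0 ≤ a t (π t))
    (hmax : ∀ σ : Equiv.Perm (Fin T), (∀ t, 0 ≤ a t (σ t)) →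
      ∑ t, a t (σ t) ≤ ∑ t, a t (π t)) :
    ∃ u ε : Fin T → ℝ, (∀ t, 0 ≤ ε t) ∧
      (∀ s t : Fin T, 0 ≤ a t s → u s ≤ u t - a t s + ε t) ∧
      ∑ t, ε t = ∑ t, a t (π t) := by
  set pot : Fin T → ℝ := dd a π (T-1) with hpot
  refine ⟨pot, fun t => a t (π t) + pot (π t) - pot t, ?_, ?_, ?_⟩
  · intro t
    have harc : Q a π t (π t) := by
      show 0 ≤ a (π.symm (π t)) t
      rw [Equiv.symm_apply_apply, h0]
    have := pot_le hadm hmax harc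
    have hq : qc a π t (π t) = a t (π t) := by
      show a (π.symm (π t)) (π t) - a (π.symm (π t)) t = a t (π t)
      rw [Equiv.symm_apply_apply, h0]; ring
    rw [hq] at this
    rw [← hpot] at this
    dsimp only
    linarith
  · intro s t hts
    have harc : Q a π s (π t) := by
      show 0 ≤ a (π.symm (π t)) s
      rw [Equiv.symm_apply_apply]; exact hts
    have := pot_le hadm hmax harc
    have hq : qc a π s (π t) = a t (π t) - a t s := by
      show a (π.symm (π t)) (π t) - a (π.symm (π t)) s = _
      rw [Equiv.symm_apply_apply]
    rw [hq] at this
    rw [← hpot] at this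
    dsimp only
    linarith
  · have hcomp : ∑ t, pot (π t) = ∑ t, pot t := Equiv.sum_comp π pot
    rw [show (fun t => a t (π t) + pot (π t) - pot t)
      = fun t => (a t (π t) + pot (π t)) - pot t from rfl]
    rw [Finset.sum_sub_distrib, Finset.sum_add_distrib, hcomp]
    ring

end Part5

/-- the constrained total money pump `TMP_c` equals the optimal value
`ε̄_c` of the constrained linear program. -/
theorem constrained_tmp_eq_lp_value
    {L T : ℕ} (p x : Fin T → Fin L → ℝ)
    (hp : ∀ t i, 0 < p t i) (hx : ∀ t i, 0 ≤ x t i) :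
    sSup {v : ℝ | ∃ σ : Equiv.Perm (Fin T),
        (∀ t, p t ⬝ᵥ x (σ t) ≤ p t ⬝ᵥ x t) ∧
        v = ∑ t, (p t ⬝ᵥ x t - p t ⬝ᵥ x (σ t))} =
      sInf {v : ℝ | ∃ u ε : Fin T → ℝ, (∀ t, 0 ≤ ε t) ∧
        (∀ s t : Fin T, p t ⬝ᵥ x s ≤ p t ⬝ᵥ x t →
          u s ≤ u t + (p t ⬝ᵥ x s - p t ⬝ᵥ x t) + ε t) ∧
        v = ∑ t, ε t} := by
  classical
  have hxx : ∀ t s : Fin T, 0 ≤ p t ⬝ᵥ x s := fun t s =>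
    Finset.sum_nonneg fun i _ => mul_nonneg (hp t i).le (hx s i)
  set S : Set ℝ := {v : ℝ | ∃ σ : Equiv.Perm (Fin T),
        (∀ t, p t ⬝ᵥ x (σ t) ≤ p t ⬝ᵥ x t) ∧
        v = ∑ t, (p t ⬝ᵥ x t - p t ⬝ᵥ x (σ t))} with hS
  set I : Set ℝ := {v : ℝ | ∃ u ε : Fin T → ℝ, (∀ t, 0 ≤ ε t) ∧
        (∀ s t : Fin T, p t ⬝ᵥ x s ≤ p t ⬝ᵥ x t →
          u s ≤ u t + (p t ⬝ᵥ x s - p t ⬝ᵥ x t) + ε t) ∧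
        v = ∑ t, ε t} with hI
  -- the maximising permutation
  have hne : (Finset.univ.filter (fun σ : Equiv.Perm (Fin T) =>
      ∀ t, p t ⬝ᵥ x (σ t) ≤ p t ⬝ᵥ x t)).Nonempty :=
    ⟨1, Finset.mem_filter.mpr ⟨Finset.mem_univ _, fun t => le_rfl⟩⟩
  set Fs : Finset ℝ := (Finset.univ.filter (fun σ : Equiv.Perm (Fin T) =>
      ∀ t, p t ⬝ᵥ x (σ t) ≤ p t ⬝ᵥ x t)).image
      (fun σ => ∑ t, (p t ⬝ᵥ x t - p t ⬝ᵥ x (σ t))) with hFs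
  have hFne : Fs.Nonempty := hne.image _
  set M : ℝ := Fs.max' hFne with hM
  obtain ⟨π, hπmem, hπval⟩ := Finset.mem_image.mp (Fs.max'_mem hFne)
  have hπadm : ∀ t, p t ⬝ᵥ x (π t) ≤ p t ⬝ᵥ x t := (Finset.mem_filter.mp hπmem).2
  have hπval' : ∑ t, (p t ⬝ᵥ x t - p t ⬝ᵥ x (π t)) = M := hπval
  have hmaxv : ∀ σ : Equiv.Perm (Fin T), (∀ t, p t ⬝ᵥ x (σ t) ≤ p t ⬝ᵥ x t) →
      ∑ t, (p t ⬝ᵥ x t - p t ⬝ᵥ x (σ t)) ≤ ∑ t, (p t ⬝ᵥ x t - p t ⬝ᵥ x (π t)) := by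
    intro σ hσ
    rw [hπval']
    exact Fs.le_max' _ (Finset.mem_image_of_mem _
      (Finset.mem_filter.mpr ⟨Finset.mem_univ _, hσ⟩))
  have hMS : M ∈ S := ⟨π, hπadm, hπval'.symm⟩
  -- strong duality: M ∈ I
  have hMI : M ∈ I := by
    obtain ⟨u₀, ε₀, hε₀, hfeas₀, hsum₀⟩ :=
      Part5.strong_exists (a := fun t s => p t ⬝ᵥ x t - p t ⬝ᵥ x s) (π := π)
        (fun t => sub_self _)
        (fun t => sub_nonneg.mpr (hπadm t))
        (fun σ hσ => hmaxv σ (fun t => sub_nonneg.mp (hσ t)))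
    have hfeas : ∀ s t : Fin T, p t ⬝ᵥ x s ≤ p t ⬝ᵥ x t →
        u₀ s ≤ u₀ t - (p t ⬝ᵥ x t - p t ⬝ᵥ x s) + ε₀ t :=
      fun s t h => hfeas₀ s t (sub_nonneg.mpr h)
    have hsum : ∑ t, ε₀ t = ∑ t, (p t ⬝ᵥ x t - p t ⬝ᵥ x (π t)) := hsum₀
    refine ⟨u₀, ε₀, hε₀, ?_, ?_⟩
    · intro s t hst
      have := hfeas s t hst
      linarith
    · rw [hsum, hπval']
  -- weak duality
  have weak : ∀ v ∈ S, ∀ w ∈ I, v ≤ w := by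
    rintro v ⟨σ, hσ, rfl⟩ w ⟨u, ε, hε, hu, rfl⟩
    have key : ∀ t, p t ⬝ᵥ x t - p t ⬝ᵥ x (σ t) ≤ ε t + (u t - u (σ t)) := by
      intro t
      have := hu (σ t) t (hσ t)
      linarith
    have hsum := Finset.sum_le_sum (fun t (_ : t ∈ Finset.univ) => key t)
    rw [Finset.sum_add_distrib, Finset.sum_sub_distrib, Finset.sum_sub_distrib,
      Equiv.sum_comp σ u] at hsum
    rw [Finset.sum_sub_distrib]
    linarith
  have hSne : S.Nonempty := ⟨M, hMS⟩
  have hIne : I.Nonempty := ⟨M, hMI⟩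
  apply le_antisymm
  · apply csSup_le hSne
    intro v hv
    exact le_csInf hIne (fun w hw => weak v hv w hw)
  · have h1 : sInf I ≤ M := csInf_le ⟨M, fun w hw => weak M hMS w hw⟩ hMI
    have h2 : M ≤ sSup S := le_csSup ⟨M, fun v hv => weak v hv M hMI⟩ hMS
    linarith
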